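/- A twice continuously differentiable 2π-periodic function h : ℝ → ℝ satisfying h''(θ) + ρ² h(θ) ≥ 0 for all θ is ρ-trigonometrically convex: for all θ₁ ≤ θ ≤ θ₂ < θ₁ + π/ρ, h(θ) sin ρ(θ₂ − θ₁) ≤ h(θ₁) sin ρ(θ₂ − θ) + h(θ₂) sin ρ(θ − θ₁). -/

import Mathlib

/-- `ρ`-trigonometric convexity: the three-point inequality. -/
def TrigConvex (ρ : ℝ) (h : ℝ → ℝ) : Prop :=
  ∀ θ₁ θ θ₂ : ℝ, θ₁ ≤ θ → θ ≤ θ₂ → θ₂ < θ₁ + Real.pi / ρ →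
    h θ * Real.sin (ρ * (θ₂ - θ₁)) ≤
      h θ₁ * Real.sin (ρ * (θ₂ - θ)) + h θ₂ * Real.sin (ρ * (θ - θ₁))

private lemma sin_hasDerivAt (ρ c x : ℝ) :
    HasDerivAt (fun y => Real.sin (ρ * (y - c))) (ρ * Real.cos (ρ * (x - c))) x := by
  have h1 : HasDerivAt (fun y => ρ * (y - c)) ρ x := by
    simpa using ((hasDerivAt_id x).sub_const c).const_mul ρ
  simpa [Function.comp_def, mul_comm] using (Real.hasDerivAt_sin (ρ * (x - c))).comp x h1

private lemma sin_rev_hasDerivAt (ρ c x : ℝ) :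
    HasDerivAt (fun y => Real.sin (ρ * (c - y))) (-(ρ * Real.cos (ρ * (c - x)))) x := by
  have h1 : HasDerivAt (fun y => ρ * (c - y)) (-ρ) x := by
    simpa using ((hasDerivAt_id x).const_sub c).const_mul ρ
  have := (Real.hasDerivAt_sin (ρ * (c - x))).comp x h1
  simpa [Function.comp_def, mul_comm] using this

private lemma cos_hasDerivAt (ρ c x : ℝ) :
    HasDerivAt (fun y => Real.cos (ρ * (y - c))) (-(ρ * Real.sin (ρ * (x - c)))) x := by
  have h1 : HasDerivAt (fun y => ρ * (y - c)) ρ x := by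
    simpa using ((hasDerivAt_id x).sub_const c).const_mul ρ
  have := (Real.hasDerivAt_cos (ρ * (x - c))).comp x h1
  simpa [Function.comp_def, mul_comm] using this

private lemma cos_rev_hasDerivAt (ρ c x : ℝ) :
    HasDerivAt (fun y => Real.cos (ρ * (c - y))) (ρ * Real.sin (ρ * (c - x))) x := by
  have h1 : HasDerivAt (fun y => ρ * (c - y)) (-ρ) x := by
    simpa using ((hasDerivAt_id x).const_sub c).const_mul ρ
  have := (Real.hasDerivAt_cos (ρ * (c - x))).comp x h1
  simpa [Function.comp_def, mul_comm] using this

/-- The strict version: `h'' + ρ²h > 0` implies trigonometric convexity. -/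
private lemma strict_case (ρ : ℝ) (hρ : 0 < ρ) (h : ℝ → ℝ)
    (hC2 : ContDiff ℝ 2 h)
    (hineq : ∀ θ : ℝ, 0 < deriv (deriv h) θ + ρ ^ 2 * h θ) :
    TrigConvex ρ h := by
  intro θ₁ θ θ₂ hle1 hle2 hlt
  rcases eq_or_lt_of_le (hle1.trans hle2) with heq | h12
  · obtain rfl : θ = θ₁ := le_antisymm (heq ▸ hle2) hle1
    obtain rfl : θ₂ = θ := heq.symm
    simp
  -- main case θ₁ < θ₂
  · -- differentiability of h
    have hd : Differentiable ℝ h := hC2.differentiable (by norm_num)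
    have hd2 : Differentiable ℝ (deriv h) := by
      have h2 : ContDiff ℝ (1 + 1) h := by
        convert hC2 using 2
        exact one_add_one_eq_two
      exact ((contDiff_succ_iff_deriv.mp h2).2.2).differentiable one_ne_zero
    -- the auxiliary point a
    set δ : ℝ := (θ₁ + Real.pi / ρ - θ₂) / 2 with hδdef
    have hδ : 0 < δ := by rw [hδdef]; linarith
    set a : ℝ := θ₁ - δ with hadef
    have haθ₁ : a < θ₁ := by rw [hadef]; linarith
    have haθ₂ : θ₂ - a < Real.pi / ρ := by rw [hadef, hδdef]; linarith
    -- basic sine positivity facts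
    have hsinA : 0 < Real.sin (ρ * (θ₂ - θ₁)) := by
      apply Real.sin_pos_of_pos_of_lt_pi
      · have : (0:ℝ) < θ₂ - θ₁ := by linarith
        positivity
      · calc ρ * (θ₂ - θ₁) < ρ * (Real.pi / ρ) := by
              apply mul_lt_mul_of_pos_left _ hρ; linarith
          _ = Real.pi := by field_simp
    set A : ℝ := Real.sin (ρ * (θ₂ - θ₁)) with hAdef
    set S : ℝ → ℝ := fun x => Real.sin (ρ * (x - a)) with hSdef
    have hSpos : ∀ x ∈ Set.Icc θ₁ θ₂, 0 < S x := by
      intro x hx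
      apply Real.sin_pos_of_pos_of_lt_pi
      · have : a < x := lt_of_lt_of_le haθ₁ hx.1
        have : (0:ℝ) < x - a := by linarith
        positivity
      · calc ρ * (x - a) ≤ ρ * (θ₂ - a) := by
              apply mul_le_mul_of_nonneg_left _ hρ.le; linarith [hx.2]
          _ < ρ * (Real.pi / ρ) := by exact mul_lt_mul_of_pos_left haθ₂ hρ
          _ = Real.pi := by field_simp
    -- F and its derivatives
    set F : ℝ → ℝ := fun x =>
      h θ₁ * Real.sin (ρ * (θ₂ - x)) + h θ₂ * Real.sin (ρ * (x - θ₁)) - h x * A with hFdef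
    set F' : ℝ → ℝ := fun x =>
      h θ₁ * -(ρ * Real.cos (ρ * (θ₂ - x))) + h θ₂ * (ρ * Real.cos (ρ * (x - θ₁)))
        - deriv h x * A with hF'def
    set F'' : ℝ → ℝ := fun x =>
      h θ₁ * -(ρ ^ 2 * Real.sin (ρ * (θ₂ - x))) + h θ₂ * -(ρ ^ 2 * Real.sin (ρ * (x - θ₁)))
        - deriv (deriv h) x * A with hF''def
    have hF : ∀ x, HasDerivAt F (F' x) x := by
      intro x
      exact (((sin_rev_hasDerivAt ρ θ₂ x).const_mul (h θ₁)).add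
        ((sin_hasDerivAt ρ θ₁ x).const_mul (h θ₂))).sub ((hd x).hasDerivAt.mul_const A)
    have hF' : ∀ x, HasDerivAt F' (F'' x) x := by
      intro x
      have t1 := (((cos_rev_hasDerivAt ρ θ₂ x).const_mul ρ).neg).const_mul (h θ₁)
      have t2 := ((cos_hasDerivAt ρ θ₁ x).const_mul ρ).const_mul (h θ₂)
      have t3 := (hd2 x).hasDerivAt.mul_const A
      have := (t1.add t2).sub t3
      refine this.congr_deriv ?_
      simp only [hF''def]; ring
    set S' : ℝ → ℝ := fun x => ρ * Real.cos (ρ * (x - a)) with hS'def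
    have hS : ∀ x, HasDerivAt S (S' x) x := fun x => sin_hasDerivAt ρ a x
    have hS' : ∀ x, HasDerivAt S' (-(ρ ^ 2 * S x)) x := by
      intro x
      have := (cos_hasDerivAt ρ a x).const_mul ρ
      refine this.congr_deriv ?_
      simp only [hSdef]; ring
    -- P = S F' - F S', with P' = S (F'' + ρ² F)
    set P : ℝ → ℝ := fun x => S x * F' x - F x * S' x with hPdef
    have hP : ∀ x, HasDerivAt P (S x * (F'' x + ρ ^ 2 * F x)) x := by
      intro x
      have := ((hS x).mul (hF' x)).sub ((hF x).mul (hS' x))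
      refine this.congr_deriv ?_
      ring
    -- key sign: F'' + ρ² F = -(h'' + ρ² h) A
    have hkey : ∀ x, F'' x + ρ ^ 2 * F x = -((deriv (deriv h) x + ρ ^ 2 * h x) * A) := by
      intro x; simp only [hF''def, hFdef]; ring
    have hPanti : StrictAntiOn P (Set.Icc θ₁ θ₂) := by
      apply strictAntiOn_of_deriv_neg (convex_Icc θ₁ θ₂)
      · exact fun x _ => ((hP x).differentiableAt).continuousAt.continuousWithinAt
      · intro x hx
        rw [interior_Icc] at hx
        rw [(hP x).deriv, hkey x]
        have h1 : 0 < S x := hSpos x (Set.mem_Icc.mpr ⟨hx.1.le, hx.2.le⟩)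
        have h2 : 0 < (deriv (deriv h) x + ρ ^ 2 * h x) * A := mul_pos (hineq x) hsinA
        exact mul_neg_of_pos_of_neg h1 (by linarith)
    -- values at endpoints
    have hFθ₁ : F θ₁ = 0 := by simp [hFdef, hAdef]
    have hFθ₂ : F θ₂ = 0 := by simp [hFdef, hAdef]
    -- G = F / S
    set G : ℝ → ℝ := fun x => F x / S x with hGdef
    have hGcont : ContinuousOn G (Set.Icc θ₁ θ₂) := by
      apply ContinuousOn.div
      · exact fun x _ => ((hF x).differentiableAt).continuousAt.continuousWithinAt
      · exact fun x _ => ((hS x).differentiableAt).continuousAt.continuousWithinAt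
      · exact fun x hx => (hSpos x hx).ne'
    have hGderiv : ∀ x ∈ Set.Icc θ₁ θ₂, HasDerivAt G (P x / (S x) ^ 2) x := by
      intro x hx
      have := (hF x).div (hS x) (hSpos x hx).ne'
      refine this.congr_deriv ?_
      ring
    -- Main argument: suffices to show F θ ≥ 0
    suffices hFθ : 0 ≤ F θ by
      simp only [hFdef] at hFθ; linarith
    by_contra hcon
    push_neg at hcon
    have hθmem : θ ∈ Set.Icc θ₁ θ₂ := ⟨hle1, hle2⟩
    have hGneg : G θ < 0 := div_neg_of_neg_of_pos hcon (hSpos θ hθmem)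
    obtain ⟨θ₀, hθ₀mem, hmin⟩ := isCompact_Icc.exists_isMinOn ⟨θ, hθmem⟩ hGcont
    have hGθ₀ : G θ₀ < 0 := lt_of_le_of_lt (hmin hθmem) hGneg
    have hGθ₁ : G θ₁ = 0 := by simp [hGdef, hFθ₁]
    have hGθ₂ : G θ₂ = 0 := by simp [hGdef, hFθ₂]
    have h1₀ : θ₁ < θ₀ := by
      rcases eq_or_lt_of_le hθ₀mem.1 with rfl | hh
      · rw [hGθ₁] at hGθ₀; exact absurd hGθ₀ (lt_irrefl 0)
      · exact hh
    have h₀2 : θ₀ < θ₂ := by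
      rcases eq_or_lt_of_le hθ₀mem.2 with rfl | hh
      · rw [hGθ₂] at hGθ₀; exact absurd hGθ₀ (lt_irrefl 0)
      · exact hh
    -- MVT on [θ₁, θ₀]
    obtain ⟨c, hc, hceq⟩ := exists_hasDerivAt_eq_slope G (fun x => P x / (S x) ^ 2) h1₀
      (hGcont.mono (Set.Icc_subset_Icc le_rfl h₀2.le))
      (fun x hx => hGderiv x ⟨hx.1.le, hx.2.le.trans h₀2.le⟩)
    have hslopeL : P c / (S c) ^ 2 < 0 := by
      rw [hceq, hGθ₁]
      exact div_neg_of_neg_of_pos (by linarith) (by linarith)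
    have hPc : P c < 0 := by
      by_contra hge; push_neg at hge
      exact absurd (div_nonneg hge (sq_nonneg _)) (not_le.mpr hslopeL)
    -- MVT on [θ₀, θ₂]
    obtain ⟨d, hdm, hdeq⟩ := exists_hasDerivAt_eq_slope G (fun x => P x / (S x) ^ 2) h₀2
      (hGcont.mono (Set.Icc_subset_Icc h1₀.le le_rfl))
      (fun x hx => hGderiv x ⟨h1₀.le.trans hx.1.le, hx.2.le⟩)
    have hslopeR : 0 < P d / (S d) ^ 2 := by
      rw [hdeq, hGθ₂]
      exact div_pos (by linarith) (by linarith)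
    have hPd : 0 < P d := by
      by_contra hge; push_neg at hge
      exact absurd (div_nonpos_of_nonpos_of_nonneg hge (sq_nonneg _)) (not_le.mpr hslopeR)
    have hcd : c < d := hc.2.trans hdm.1
    have := hPanti ⟨hc.1.le, hc.2.le.trans h₀2.le⟩ ⟨h1₀.le.trans hdm.1.le, hdm.2.le⟩ hcd
    linarith

/-- a `C²` `2π`-periodic function with `h'' + ρ²h ≥ 0` is
`ρ`-trigonometrically convex. -/
theorem stmt7 (ρ : ℝ) (hρ : 0 < ρ) (h : ℝ → ℝ)
    (hC2 : ContDiff ℝ 2 h) (hper : Function.Periodic h (2 * Real.pi))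
    (hineq : ∀ θ : ℝ, 0 ≤ deriv (deriv h) θ + ρ ^ 2 * h θ) :
    TrigConvex ρ h := by
  intro θ₁ θ θ₂ hle1 hle2 hlt
  set A : ℝ := Real.sin (ρ * (θ₂ - θ₁)) with hAdef
  set B : ℝ := Real.sin (ρ * (θ₂ - θ)) with hBdef
  set C : ℝ := Real.sin (ρ * (θ - θ₁)) with hCdef
  have hstep : ∀ ε : ℝ, 0 < ε → h θ * A ≤ h θ₁ * B + h θ₂ * C + ε * (B + C - A) := by
    intro ε hε
    have hC2' : ContDiff ℝ 2 (fun x => h x + ε) := hC2.add contDiff_const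
    have hineq' : ∀ x : ℝ,
        0 < deriv (deriv fun y => h y + ε) x + ρ ^ 2 * (h x + ε) := by
      intro x
      have hder : (deriv fun y => h y + ε) = deriv h := funext fun y => deriv_add_const ε
      rw [hder]
      have h1 := hineq x
      have h2 : 0 < ρ ^ 2 * ε := by positivity
      nlinarith
    have hh := strict_case ρ hρ _ hC2' (fun x => hineq' x) θ₁ θ θ₂ hle1 hle2 hlt
    simp only [← hAdef, ← hBdef, ← hCdef] at hh
    nlinarith [hh]
  rcases le_or_gt (B + C - A) 0 with hK | hK
  · have := hstep 1 one_pos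
    linarith
  · apply le_of_forall_pos_le_add
    intro δ hδ
    have h2 := hstep (δ / (B + C - A)) (div_pos hδ hK)
    have hmul : δ / (B + C - A) * (B + C - A) = δ := div_mul_cancel₀ δ (ne_of_gt hK)
    rw [hmul] at h2
    exact h2
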